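/- Let a, b ∈ (ℂˣ)^m and S₁, S₂ ⊆ {1,…,m}. There exists an invertible matrix W ∈ Mat₂(ℂ[h]) such that W⁻¹·E_i^{(a,S₁)}·Δ_i⁻¹(W) = E_i^{(b,S₂)} and W⁻¹·F_i^{(a,S₁)}·Δ_i(W) = F_i^{(b,S₂)} for all i ∈ {1,…,m} if and only if S₁ = S₂ and there exists γ ∈ ℂˣ with a_i = γ·b_i for all i ∈ {1,…,m}. -/

import Mathlib

open MvPolynomial

/-- The shift automorphism of `ℂ[h₁,…]` sending `h_i ↦ h_i + c i`. -/
noncomputable def shiftAut {ι : Type*} (c : ι → ℂ) :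
    MvPolynomial ι ℂ ≃ₐ[ℂ] MvPolynomial ι ℂ :=
  AlgEquiv.ofAlgHom
    (aeval fun i => X i + C (c i))
    (aeval fun i => X i - C (c i))
    (by ext i : 1; simp)
    (by ext i : 1; simp)

/-- The automorphism `σ_i` of `ℂ[h₁,…,h_m]` with `σ_i(h_i) = h_i - 1`, `σ_i(h_j) = h_j` (j ≠ i). -/
noncomputable def sig (m : ℕ) (i : Fin m) :
    MvPolynomial (Fin m) ℂ ≃ₐ[ℂ] MvPolynomial (Fin m) ℂ :=
  shiftAut (fun j => if j = i then (-1 : ℂ) else 0)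

/-- The automorphism `Δ = σ₁∘⋯∘σ_m`, i.e. `Δ(h_i) = h_i - 1` for all `i`. -/
noncomputable def Del (m : ℕ) :
    MvPolynomial (Fin m) ℂ ≃ₐ[ℂ] MvPolynomial (Fin m) ℂ :=
  shiftAut (fun _ : Fin m => (-1 : ℂ))

/-- The automorphism `Δ_i = σ_i⁻¹ ∘ Δ`. -/
noncomputable def Deli (m : ℕ) (i : Fin m) :
    MvPolynomial (Fin m) ℂ ≃ₐ[ℂ] MvPolynomial (Fin m) ℂ :=
  (Del m).trans (sig m i).symm

/-- Normal-form matrix `E_i^{(a,S)}`. -/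
noncomputable def Emat (m : ℕ) (a : Fin m → ℂˣ) (S : Finset (Fin m)) (i : Fin m) :
    Matrix (Fin 2) (Fin 2) (MvPolynomial (Fin m) ℂ) :=
  if i ∈ S then !![0, C ((a i : ℂ)) * X i; 0, 0] else !![0, C ((a i : ℂ)); 0, 0]

/-- Normal-form matrix `F_i^{(a,S)}`. -/
noncomputable def Fmat (m : ℕ) (a : Fin m → ℂˣ) (S : Finset (Fin m)) (i : Fin m) :
    Matrix (Fin 2) (Fin 2) (MvPolynomial (Fin m) ℂ) :=
  if i ∈ S then !![0, 0; C (((a i)⁻¹ : ℂˣ) : ℂ), 0]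
  else !![0, 0; C (((a i)⁻¹ : ℂˣ) : ℂ) * X i, 0]

/-- `M(a, S₁) ≅ M(b, S₂)` iff `S₁ = S₂` and `a = γ·b` for some `γ ∈ ℂˣ`. -/

private lemma algEquiv_C {m : ℕ} (f : MvPolynomial (Fin m) ℂ ≃ₐ[ℂ] MvPolynomial (Fin m) ℂ) (c : ℂ) :
    f (C c) = C c := by
  rw [← MvPolynomial.algebraMap_eq]; exact f.commutes c

private lemma unit_eq_C : ∀ (n : ℕ) (p : MvPolynomial (Fin n) ℂ), IsUnit p → ∃ c : ℂ, p = C c := by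
  intro n
  induction n with
  | zero => intro p _; exact ⟨_, MvPolynomial.eq_C_of_isEmpty p⟩
  | succ n ih =>
      intro p hp
      have h2 : IsUnit (finSuccEquiv ℂ n p) := hp.map (finSuccEquiv ℂ n)
      rw [Polynomial.isUnit_iff] at h2
      obtain ⟨r, hr, hrp⟩ := h2
      obtain ⟨c, hc⟩ := ih r hr
      refine ⟨c, ?_⟩
      have h3 := congrArg (finSuccEquiv ℂ n).symm hrp
      rw [AlgEquiv.symm_apply_apply] at h3
      rw [← h3, hc]
      have h4 := RingHom.congr_fun (finSuccEquiv_comp_C_eq_C (R := ℂ) n) c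
      simpa using h4

private lemma Emat_eq (m : ℕ) (a : Fin m → ℂˣ) (S : Finset (Fin m)) (i : Fin m) :
    Emat m a S i = !![0, if i ∈ S then C ((a i : ℂ)) * X i else C ((a i : ℂ)); 0, 0] := by
  unfold Emat; split_ifs <;> rfl

private lemma Fmat_eq (m : ℕ) (a : Fin m → ℂˣ) (S : Finset (Fin m)) (i : Fin m) :
    Fmat m a S i =
      !![0, 0; if i ∈ S then C (((a i)⁻¹ : ℂˣ) : ℂ) else C (((a i)⁻¹ : ℂˣ) : ℂ) * X i, 0] := by
  unfold Fmat; split_ifs <;> rfl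

theorem stmt_12 (m : ℕ) (hm : 2 ≤ m) (a b : Fin m → ℂˣ) (S₁ S₂ : Finset (Fin m)) :
    (∃ W : Matrix (Fin 2) (Fin 2) (MvPolynomial (Fin m) ℂ), IsUnit W ∧
      ∀ i, W⁻¹ * Emat m a S₁ i * W.map ⇑(Deli m i).symm = Emat m b S₂ i ∧
           W⁻¹ * Fmat m a S₁ i * W.map ⇑(Deli m i) = Fmat m b S₂ i) ↔
    (S₁ = S₂ ∧ ∃ γ : ℂˣ, ∀ i, a i = γ * b i) := by
  constructor
  · rintro ⟨W, hW, hrel⟩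
    have hdet : IsUnit W.det := (Matrix.isUnit_iff_isUnit_det W).mp hW
    have key : ∀ i : Fin m,
        (if i ∈ S₁ then C ((a i : ℂ)) * X i else C ((a i : ℂ))) * (Deli m i).symm (W 1 1)
          = W 0 0 * (if i ∈ S₂ then C ((b i : ℂ)) * X i else C ((b i : ℂ)))
        ∧ W 1 0 * (if i ∈ S₂ then C ((b i : ℂ)) * X i else C ((b i : ℂ))) = 0 := by
      intro i
      have hE' : Emat m a S₁ i * W.map ⇑(Deli m i).symm = W * Emat m b S₂ i := by
        have h0 := congrArg (fun M => W * M) (hrel i).1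
        simpa [← Matrix.mul_assoc, Matrix.mul_nonsing_inv W hdet] using h0
      rw [Emat_eq, Emat_eq] at hE'
      constructor
      · have h01 := congrFun (congrFun hE' 0) 1
        simpa [Matrix.mul_apply, Fin.sum_univ_two, Matrix.map_apply] using h01
      · have h11 := congrFun (congrFun hE' 1) 1
        simpa [Matrix.mul_apply, Fin.sum_univ_two, Matrix.map_apply] using h11.symm
    have hb0 : ∀ i : Fin m,
        (if i ∈ S₂ then C ((b i : ℂ)) * X i else C ((b i : ℂ))) ≠ (0 : MvPolynomial (Fin m) ℂ) := by
      intro i; split_ifs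
      · exact mul_ne_zero (C_ne_zero.mpr (b i).ne_zero) (X_ne_zero i)
      · exact C_ne_zero.mpr (b i).ne_zero
    have i0 : Fin m := ⟨0, by omega⟩
    have hW10 : W 1 0 = 0 := by
      rcases mul_eq_zero.mp (key i0).2 with h | h
      · exact h
      · exact absurd h (hb0 i0)
    have hdet2 : IsUnit (W 0 0 * W 1 1) := by
      have : W.det = W 0 0 * W 1 1 := by rw [Matrix.det_fin_two, hW10]; ring
      rwa [this] at hdet
    obtain ⟨c, hc⟩ := unit_eq_C m (W 0 0) (isUnit_of_mul_isUnit_left hdet2)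
    obtain ⟨d, hd⟩ := unit_eq_C m (W 1 1) (isUnit_of_mul_isUnit_right hdet2)
    have hc0 : c ≠ 0 := by
      rintro rfl
      exact ((hc ▸ isUnit_of_mul_isUnit_left hdet2).ne_zero) (by simp)
    have hd0 : d ≠ 0 := by
      rintro rfl
      exact ((hd ▸ isUnit_of_mul_isUnit_right hdet2).ne_zero) (by simp)
    have key2 : ∀ i : Fin m,
        (if i ∈ S₁ then C ((a i : ℂ)) * X i else C ((a i : ℂ))) * C d
          = C c * (if i ∈ S₂ then C ((b i : ℂ)) * X i else C ((b i : ℂ))) := by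
      intro i
      have := (key i).1
      rwa [hc, hd, algEquiv_C] at this
    have main : ∀ i : Fin m, (i ∈ S₁ ↔ i ∈ S₂) ∧ (a i : ℂ) * d = c * (b i : ℂ) := by
      intro i
      have h := key2 i
      by_cases h1 : i ∈ S₁ <;> by_cases h2 : i ∈ S₂ <;> simp only [h1, h2, if_pos, if_neg,
        if_true, if_false] at h
      · refine ⟨by tauto, ?_⟩
        have h' : C ((a i : ℂ) * d) * X i = C (c * (b i : ℂ)) * X i := by
          rw [C_mul, C_mul]; linear_combination h
        have := mul_right_cancel₀ (X_ne_zero i) h'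
        exact C_injective _ _ this
      · exfalso
        have h' : C ((a i : ℂ) * d) * X i = C (c * (b i : ℂ)) := by
          rw [C_mul, C_mul]; linear_combination h
        have h2 := congrArg (coeff 0) h'
        simp [mul_assoc, coeff_C_mul, coeff_zero_X, coeff_zero_C] at h2
        exact hc0 h2
      · exfalso
        have h' : C (c * (b i : ℂ)) * X i = C ((a i : ℂ) * d) := by
          rw [C_mul, C_mul]; linear_combination - h
        have h2 := congrArg (coeff 0) h'
        simp [mul_assoc, coeff_C_mul, coeff_zero_X, coeff_zero_C] at h2
        exact hd0 h2
      · refine ⟨by tauto, ?_⟩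
        have h' : (C ((a i : ℂ) * d) : MvPolynomial (Fin m) ℂ) = C (c * (b i : ℂ)) := by
          rw [C_mul, C_mul]; linear_combination h
        exact C_injective _ _ h'
    refine ⟨Finset.ext fun i => (main i).1, Units.mk0 c hc0 * (Units.mk0 d hd0)⁻¹, fun i => ?_⟩
    ext
    have hi := (main i).2
    push_cast [Units.val_mul, Units.val_mk0]
    field_simp
    linear_combination hi
  · rintro ⟨rfl, γ, hγ⟩
    refine ⟨!![C ((γ : ℂ)), 0; 0, 1], ?_, ?_⟩
    · rw [Matrix.isUnit_iff_isUnit_det, Matrix.det_fin_two_of]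
      simpa using (γ.isUnit).map (C : ℂ →+* MvPolynomial (Fin m) ℂ)
    · have hinv : (!![C ((γ : ℂ)), 0; 0, 1] : Matrix (Fin 2) (Fin 2) (MvPolynomial (Fin m) ℂ))⁻¹
          = !![C (((γ⁻¹ : ℂˣ) : ℂ)), 0; 0, 1] := by
        apply Matrix.inv_eq_left_inv
        rw [Matrix.mul_fin_two]
        simp [← C_mul, Matrix.one_fin_two]
      have hmap : ∀ f : MvPolynomial (Fin m) ℂ ≃ₐ[ℂ] MvPolynomial (Fin m) ℂ,
          (!![C ((γ : ℂ)), 0; 0, 1] : Matrix (Fin 2) (Fin 2) (MvPolynomial (Fin m) ℂ)).map ⇑f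
            = !![C ((γ : ℂ)), 0; 0, 1] := by
        intro f
        ext j k
        fin_cases j <;> fin_cases k <;> simp [Matrix.map_apply, algEquiv_C]
      intro i
      rw [hinv, hmap, hmap, Emat_eq, Emat_eq, Fmat_eq, Fmat_eq]
      have hval : (a i : ℂ) = (γ : ℂ) * (b i : ℂ) := by rw [hγ i]; simp
      have h1 : (C (((γ : ℂ))⁻¹) : MvPolynomial (Fin m) ℂ) * C ((γ : ℂ)) = 1 := by
        rw [← C_mul, inv_mul_cancel₀ γ.ne_zero, C_1]
      have hvalinv' : ((a i : ℂ))⁻¹ = ((γ : ℂ))⁻¹ * ((b i : ℂ))⁻¹ := by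
        rw [hval, mul_inv]
      constructor
      · refine Matrix.ext fun j k => ?_
        fin_cases j <;> fin_cases k <;> simp [Matrix.mul_apply, Fin.sum_univ_two]
        split_ifs with h
        · rw [hval, C_mul]
          linear_combination (C ((b i : ℂ)) * X i) * h1
        · rw [hval, C_mul]
          linear_combination C ((b i : ℂ)) * h1
      · refine Matrix.ext fun j k => ?_
        fin_cases j <;> fin_cases k <;> simp [Matrix.mul_apply, Fin.sum_univ_two]
        split_ifs with h
        · rw [hvalinv', C_mul]
          linear_combination C (((b i : ℂ))⁻¹) * h1
        · rw [hvalinv', C_mul]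
          linear_combination (C (((b i : ℂ))⁻¹) * X i) * h1
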